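/- arXiv:1806.10179 — 8 statements merged into one kernel-verified Lean document; each statement's English description precedes it below -/
import Mathlib

section
/- Let H be a real inner product space, let N ≥ 1, and for each t ∈ {1,…,N} let φ_t ∈ H with ‖φ_t‖ ≤ 1 and y_t ∈ {−1, +1}. Let λ > 0, define the instantaneous objective P_t(w) = (λ/2)‖w‖² + max(0, 1 − y_t⟨w, φ_t⟩), the batch objective P(w) = (λ/2)‖w‖² + (1/N)∑_{t=1}^N max(0, 1 − y_t⟨w, φ_t⟩), and the learning rate η_t = 1/(λt). Let the BSGD iterates be w_1 = 0 and w_{t+1} = w_t − η_t g_t + η_t E_t, where g_t = λw_t − (y_t φ_t if y_t⟨w_t, φ_t⟩ < 1, else 0) and E_t ∈ H is the gradient error. Assume ‖E_t‖ ≤ 1 for all t, set Ē = (1/N)∑_{t=1}^N ‖E_t‖, and set U = 2/λ if λ ≤ 4 and U = 1/√λ otherwise. Then for any minimizer w* of P, (1/N)∑_{t=1}^N P_t(w_t) − (1/N)∑_{t=1}^N P_t(w*) ≤ (λU + 2)²(ln N + 1)/(2λN) + 2U·Ē. -/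
open scoped RealInnerProductSpace

lemma harmonic_le_log (N : ℕ) (hN : 1 ≤ N) :
    ∑ t ∈ Finset.Icc 1 N, (1:ℝ)/t ≤ Real.log N + 1 := by
  induction N, hN using Nat.le_induction with
  | base => simp
  | succ N hN ih =>
    rw [Finset.sum_Icc_succ_top (by omega : 1 ≤ N + 1)]
    have hN0 : (0:ℝ) < N := by positivity
    have hlog : Real.log ((N:ℝ)/((N:ℝ)+1)) ≤ (N:ℝ)/((N:ℝ)+1) - 1 :=
      Real.log_le_sub_one_of_pos (by positivity)
    rw [Real.log_div (by positivity) (by positivity)] at hlog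
    have h2 : (N:ℝ)/((N:ℝ)+1) - 1 = -(1/((N:ℝ)+1)) := by field_simp; ring
    push_cast
    linarith [h2 ▸ hlog]

lemma telescope_Icc (f : ℕ → ℝ) (N : ℕ) :
    ∑ t ∈ Finset.Icc 1 N, (f t - f (t+1)) = f 1 - f (N+1) := by
  have h : Finset.Icc 1 N = Finset.Ico 1 (N+1) := by rw [Finset.Ico_add_one_right_eq_Icc]
  rw [h, Finset.sum_Ico_eq_sum_range]
  simp only [Nat.add_sub_cancel]
  have := Finset.sum_range_sub' (fun i => f (1 + i)) N
  simpa [add_assoc, add_comm] using this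

lemma strong_conv_step {H : Type*} [NormedAddCommGroup H] [InnerProductSpace ℝ H]
    (lam : ℝ) (yv : ℝ) (φv wt ws : H) :
    (lam/2*‖wt‖^2 + max 0 (1 - yv*⟪wt,φv⟫)) - (lam/2*‖ws‖^2 + max 0 (1 - yv*⟪ws,φv⟫))
      ≤ ⟪lam•wt - (if yv*⟪wt,φv⟫ < 1 then yv•φv else 0), wt - ws⟫ - lam/2*‖wt-ws‖^2 := by
  have hq : lam/2*‖wt - ws‖^2 = lam/2*(‖wt‖^2 - 2*⟪wt,ws⟫ + ‖ws‖^2) := by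
    rw [norm_sub_sq_real wt ws]
  have hcm1 : ⟪φv, wt⟫ = ⟪wt, φv⟫ := real_inner_comm _ _
  have hcm2 : ⟪φv, ws⟫ = ⟪ws, φv⟫ := real_inner_comm _ _
  by_cases hc : yv*⟪wt,φv⟫ < 1
  · rw [if_pos hc]
    have h1 : max 0 (1 - yv*⟪wt,φv⟫) = 1 - yv*⟪wt,φv⟫ := max_eq_right (by linarith)
    have h2 : 1 - yv*⟪ws,φv⟫ ≤ max 0 (1 - yv*⟪ws,φv⟫) := le_max_right _ _
    simp only [inner_sub_left, inner_sub_right, real_inner_smul_left,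
      real_inner_self_eq_norm_sq, hcm1, hcm2, h1]
    linarith [hq, h2]
  · rw [if_neg hc]
    have h1 : max 0 (1 - yv*⟪wt,φv⟫) = 0 := max_eq_left (by push_neg at hc; linarith)
    have h2 : (0:ℝ) ≤ max 0 (1 - yv*⟪ws,φv⟫) := le_max_left _ _
    simp only [inner_sub_left, inner_sub_right, real_inner_smul_left,
      real_inner_self_eq_norm_sq, h1, inner_zero_left]
    linarith [hq, h2]

lemma update_identity {H : Type*} [NormedAddCommGroup H] [InnerProductSpace ℝ H]
    (η : ℝ) (hη : 0 < η) (wt wt1 ws gt Et : H)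
    (hrec : wt1 = wt - η • gt + η • Et) :
    ⟪gt, wt - ws⟫ = (‖wt - ws‖^2 - ‖wt1 - ws‖^2)/(2*η) + η/2 * ‖gt - Et‖^2
      + ⟪Et, wt - ws⟫ := by
  have h1 : wt1 - ws = (wt - ws) - η • (gt - Et) := by rw [hrec, smul_sub]; abel
  have h2 : ‖wt1 - ws‖^2 = ‖wt - ws‖^2 - 2*(η * ⟪wt - ws, gt - Et⟫) + η^2 * ‖gt - Et‖^2 := by
    rw [h1, norm_sub_sq_real, real_inner_smul_right, norm_smul, mul_pow,
      Real.norm_eq_abs, abs_of_pos hη]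
    try ring
  have h3 : ⟪wt - ws, gt - Et⟫ = ⟪gt, wt - ws⟫ - ⟪Et, wt - ws⟫ := by
    rw [inner_sub_right, real_inner_comm (wt - ws) gt, real_inner_comm (wt - ws) Et]
  rw [h3] at h2
  have hη' : η ≠ 0 := ne_of_gt hη
  field_simp
  linear_combination (1:ℝ) * h2

set_option maxHeartbeats 1000000 in
/-- Theorem 1 (BSGD regret bound with gradient error). -/
theorem bsgd_regret_bound
    {H : Type*} [NormedAddCommGroup H] [InnerProductSpace ℝ H]
    (N : ℕ) (hN : 1 ≤ N)
    (φ : ℕ → H) (y : ℕ → ℝ) (lam : ℝ) (hlam : 0 < lam)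
    (hφ : ∀ t, 1 ≤ t → t ≤ N → ‖φ t‖ ≤ 1)
    (hy : ∀ t, 1 ≤ t → t ≤ N → y t = -1 ∨ y t = 1)
    (Pt : ℕ → H → ℝ)
    (hPt : ∀ t v, Pt t v = lam / 2 * ‖v‖ ^ 2 + max 0 (1 - y t * ⟪v, φ t⟫))
    (P : H → ℝ)
    (hP : ∀ v, P v = lam / 2 * ‖v‖ ^ 2
        + (1 / (N : ℝ)) * ∑ t ∈ Finset.Icc 1 N, max 0 (1 - y t * ⟪v, φ t⟫))
    (η : ℕ → ℝ) (hη : ∀ t, η t = 1 / (lam * t))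
    (w : ℕ → H) (E : ℕ → H) (g : ℕ → H)
    (hg : ∀ t, 1 ≤ t → t ≤ N →
        g t = lam • w t - (if y t * ⟪w t, φ t⟫ < 1 then y t • φ t else 0))
    (hw1 : w 1 = 0)
    (hwrec : ∀ t, 1 ≤ t → t ≤ N → w (t + 1) = w t - η t • g t + η t • E t)
    (hE : ∀ t, 1 ≤ t → t ≤ N → ‖E t‖ ≤ 1)
    (Ebar : ℝ) (hEbar : Ebar = (1 / (N : ℝ)) * ∑ t ∈ Finset.Icc 1 N, ‖E t‖)
    (U : ℝ) (hU : U = if lam ≤ 4 then 2 / lam else 1 / Real.sqrt lam)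
    (wstar : H) (hstar : ∀ v, P wstar ≤ P v) :
    (1 / (N : ℝ)) * ∑ t ∈ Finset.Icc 1 N, Pt t (w t)
      - (1 / (N : ℝ)) * ∑ t ∈ Finset.Icc 1 N, Pt t wstar
      ≤ (lam * U + 2) ^ 2 * (Real.log N + 1) / (2 * lam * N) + 2 * U * Ebar := by
  have hN0 : (0:ℝ) < N := by exact_mod_cast Nat.lt_of_lt_of_le Nat.zero_lt_one hN
  set s := Real.sqrt lam with hsdef
  have hs : 0 < s := Real.sqrt_pos.2 hlam
  have hs2 : s^2 = lam := Real.sq_sqrt hlam.le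
  have hUpos : 0 < U := by
    rw [hU]; split <;> positivity
  -- 2/lam ≤ U
  have h2lamU : 2/lam ≤ U := by
    rw [hU]; split
    · exact le_refl _
    · next h =>
      push_neg at h
      have hsgt : 2 < s := by nlinarith
      rw [div_le_div_iff₀ hlam hs]
      nlinarith
  -- 1/s ≤ U
  have hinvsU : 1/s ≤ U := by
    rw [hU]; split
    · next h =>
      have hsle : s ≤ 2 := by nlinarith
      rw [div_le_div_iff₀ hs hlam]
      nlinarith
    · exact le_refl _
  -- bound on wstar
  have hws : ‖wstar‖ ≤ 1/s := by
    by_contra hcon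
    push_neg at hcon
    set r := ‖wstar‖ with hr
    have hrpos : 0 < r := lt_trans (by positivity) hcon
    have hsr : 1 < s * r := by
      rw [div_lt_iff₀ hs] at hcon; nlinarith
    set c := 1/(s*r) with hc
    have hsrpos : 0 < s*r := by positivity
    have hc0 : 0 < c := by positivity
    have hce : c*(s*r) = 1 := by rw [hc]; field_simp
    have hc1 : c < 1 := by
      rw [hc]; rw [div_lt_one hsrpos]; exact hsr
    have hterm : ∀ t ∈ Finset.Icc 1 N,
        max 0 (1 - y t * ⟪c•wstar, φ t⟫) ≤ c * max 0 (1 - y t*⟪wstar,φ t⟫) + (1-c) := by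
      intro t _
      rw [real_inner_smul_left]
      have hm1 : (0:ℝ) ≤ max 0 (1 - y t*⟪wstar,φ t⟫) := le_max_left _ _
      have hm2 : 1 - y t*⟪wstar,φ t⟫ ≤ max 0 (1 - y t*⟪wstar,φ t⟫) := le_max_right _ _
      apply max_le
      · nlinarith
      · nlinarith [mul_le_mul_of_nonneg_left hm2 hc0.le]
    have hPle := hstar (c • wstar)
    rw [hP, hP] at hPle
    set Sm := ∑ t ∈ Finset.Icc 1 N, max 0 (1 - y t * ⟪wstar, φ t⟫) with hSm
    have hSnn : 0 ≤ Sm := Finset.sum_nonneg (fun t _ => le_max_left _ _)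
    have hsum : ∑ t ∈ Finset.Icc 1 N, max 0 (1 - y t * ⟪c•wstar, φ t⟫)
        ≤ c * Sm + (1-c)*N := by
      calc ∑ t ∈ Finset.Icc 1 N, max 0 (1 - y t * ⟪c•wstar, φ t⟫)
          ≤ ∑ t ∈ Finset.Icc 1 N, (c * max 0 (1 - y t*⟪wstar,φ t⟫) + (1-c)) :=
            Finset.sum_le_sum hterm
        _ = c * Sm + (1-c)*N := by
            rw [Finset.sum_add_distrib, ← Finset.mul_sum, Finset.sum_const,
              Nat.card_Icc]
            simp [Nat.add_sub_cancel, mul_comm]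
            exact Or.inl hSm.symm
    have hnorm : ‖c • wstar‖^2 = c^2 * r^2 := by
      rw [norm_smul, Real.norm_eq_abs, abs_of_pos hc0, mul_pow]
    have hkey : lam/2*r^2 + (1/(N:ℝ))*Sm ≤ lam/2*(c^2*r^2) + (1/(N:ℝ))*(c*Sm + (1-c)*N) := by
      rw [hnorm] at hPle
      have hmono := mul_le_mul_of_nonneg_left hsum (by positivity : (0:ℝ) ≤ 1/(N:ℝ))
      linarith [hPle, hmono]
    have hNne : (N:ℝ) ≠ 0 := ne_of_gt hN0
    have hkey2 : lam/2*r^2*(1-c^2) + (1-c)*((1/(N:ℝ))*Sm) ≤ 1-c := by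
      have hexp : (1/(N:ℝ))*(c*Sm + (1-c)*N) = c*((1/(N:ℝ))*Sm) + (1-c) := by
        field_simp
      rw [hexp] at hkey
      linarith [hkey]
    have h1c : 0 < 1 - c := by linarith
    set A := (1/(N:ℝ))*Sm with hA
    have hAnn : 0 ≤ A := by positivity
    have hdiv : lam/2*r^2*(1+c) + A ≤ 1 := by
      have hmul : (1-c)*(lam/2*r^2*(1+c) + A) ≤ (1-c)*1 := by
        have hid : (1-c)*(lam/2*r^2*(1+c) + A) = lam/2*r^2*(1-c^2) + (1-c)*A := by ring
        rw [hid]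
        linarith [hkey2]
      exact le_of_mul_le_mul_left (by linarith [hmul]) h1c
    have h5 : lam*r^2*c = s*r := by
      linear_combination (s*r)*hce - (r^2*c)*hs2
    have h6 : 1 < lam*r^2 := by
      have h := one_lt_pow₀ hsr two_ne_zero
      calc (1:ℝ) < (s*r)^2 := h
        _ = lam*r^2 := by rw [mul_pow, hs2]
    linarith [hdiv, h5, h6, hAnn, hsr]
  have hwsU : ‖wstar‖ ≤ U := le_trans hws hinvsU
  -- bound on iterates
  have hwb : ∀ t, 1 ≤ t → t ≤ N → ‖w t‖ ≤ 2/lam := by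
    intro t ht1
    induction t, ht1 using Nat.le_induction with
    | base => intro _; rw [hw1]; simp; positivity
    | succ t ht ih =>
      intro htN
      have htN' : t ≤ N := by omega
      have hwt := ih htN'
      have ht0 : (0:ℝ) < t := by exact_mod_cast Nat.lt_of_lt_of_le Nat.zero_lt_one ht
      set b : H := if y t * ⟪w t, φ t⟫ < 1 then y t • φ t else 0 with hb
      have hbn : ‖b‖ ≤ 1 := by
        rw [hb]; split
        · rw [norm_smul]
          rcases hy t ht htN' with h|h <;> rw [h] <;> simpa using hφ t ht htN'
        · simp
      have hrec := hwrec t ht htN'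
      rw [hg t ht htN', ← hb] at hrec
      have hid : w (t+1) = (1 - η t * lam) • w t + η t • b + η t • E t := by
        rw [hrec, smul_sub, smul_smul]
        module
      have hηt : η t = 1/(lam*(t:ℝ)) := hη t
      have hηpos : 0 < η t := by rw [hηt]; positivity
      have hcoef : 1 - η t * lam = 1 - 1/(t:ℝ) := by
        rw [hηt]; field_simp
      have hcnn : 0 ≤ 1 - 1/(t:ℝ) := by
        have : 1/(t:ℝ) ≤ 1 := by
          rw [div_le_one ht0]; exact_mod_cast ht
        linarith
      have hEn := hE t ht htN'
      calc ‖w (t+1)‖ ≤ ‖(1 - η t * lam) • w t‖ + ‖η t • b‖ + ‖η t • E t‖ := by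
            rw [hid]; exact norm_add₃_le
        _ = |1 - η t * lam| * ‖w t‖ + |η t| * ‖b‖ + |η t| * ‖E t‖ := by
            simp [norm_smul, Real.norm_eq_abs]
        _ ≤ (1 - 1/(t:ℝ)) * (2/lam) + (1/(lam*(t:ℝ))) * 1 + (1/(lam*(t:ℝ))) * 1 := by
            rw [hcoef, abs_of_nonneg hcnn, hηt, abs_of_nonneg (by positivity : (0:ℝ) ≤ 1/(lam*(t:ℝ)))]
            gcongr <;> first
              | exact hcnn
              | exact hwt
              | exact hbn
              | exact hEn
              | positivity
        _ = 2/lam := by field_simp; ring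
  have hwtU : ∀ t, 1 ≤ t → t ≤ N → ‖w t‖ ≤ U := fun t h1 h2 =>
    le_trans (hwb t h1 h2) h2lamU
  set G := lam*U + 2 with hG
  have hGpos : 0 < G := by positivity
  set a : ℕ → ℝ := fun t => ‖w t - wstar‖^2 with ha
  set f : ℕ → ℝ := fun t => lam*((t:ℝ)-1)/2 * a t with hf
  -- per-step bound
  have key : ∀ t ∈ Finset.Icc 1 N, Pt t (w t) - Pt t wstar
      ≤ (f t - f (t+1)) + (G^2/(2*lam))*(1/(t:ℝ)) + 2*U*‖E t‖ := by
    intro t htm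
    obtain ⟨ht1, htN⟩ := Finset.mem_Icc.1 htm
    have ht0 : (0:ℝ) < t := by exact_mod_cast Nat.lt_of_lt_of_le Nat.zero_lt_one ht1
    have hsc := strong_conv_step lam (y t) (φ t) (w t) wstar
    rw [← hg t ht1 htN] at hsc
    have hηt : η t = 1/(lam*(t:ℝ)) := hη t
    have hηpos : 0 < η t := by rw [hηt]; positivity
    have hui := update_identity (η t) hηpos (w t) (w (t+1)) wstar (g t) (E t)
      (hwrec t ht1 htN)
    have hdU : ‖w t - wstar‖ ≤ 2*U := by
      calc ‖w t - wstar‖ ≤ ‖w t‖ + ‖wstar‖ := norm_sub_le _ _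
        _ ≤ U + U := add_le_add (hwtU t ht1 htN) hwsU
        _ = 2*U := by ring
    have hil : ⟪E t, w t - wstar⟫ ≤ 2*U*‖E t‖ := by
      calc ⟪E t, w t - wstar⟫ ≤ ‖E t‖ * ‖w t - wstar‖ := real_inner_le_norm _ _
        _ ≤ ‖E t‖ * (2*U) := mul_le_mul_of_nonneg_left hdU (norm_nonneg _)
        _ = 2*U*‖E t‖ := by ring
    have hbn : ‖(if y t * ⟪w t, φ t⟫ < 1 then y t • φ t else 0 : H)‖ ≤ 1 := by
      split
      · rw [norm_smul]
        rcases hy t ht1 htN with h|h <;> rw [h] <;> simpa using hφ t ht1 htN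
      · simp
    have hgn : ‖g t‖ ≤ lam*U + 1 := by
      rw [hg t ht1 htN]
      calc ‖lam • w t - _‖ ≤ ‖lam • w t‖ + ‖(if y t * ⟪w t, φ t⟫ < 1 then y t • φ t else 0 : H)‖ :=
            norm_sub_le _ _
        _ ≤ lam*U + 1 := by
            rw [norm_smul, Real.norm_eq_abs, abs_of_pos hlam]
            exact add_le_add (mul_le_mul_of_nonneg_left (hwtU t ht1 htN) hlam.le) hbn
    have hgE2 : ‖g t - E t‖^2 ≤ G^2 := by
      have h1 : ‖g t - E t‖ ≤ G := by
        calc ‖g t - E t‖ ≤ ‖g t‖ + ‖E t‖ := norm_sub_le _ _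
          _ ≤ (lam*U+1) + 1 := add_le_add hgn (hE t ht1 htN)
          _ = G := by rw [hG]; ring
      nlinarith [norm_nonneg (g t - E t)]
    rw [hηt] at hui
    have e1 : (‖w t - wstar‖^2 - ‖w (t+1) - wstar‖^2)/(2*(1/(lam*(t:ℝ))))
        = lam*(t:ℝ)/2*(a t) - lam*(t:ℝ)/2*(a (t+1)) := by
      simp only [ha]
      field_simp
    have hBc : (1/(lam*(t:ℝ)))/2 * ‖g t - E t‖^2 ≤ G^2/(2*lam)*(1/(t:ℝ)) := by
      calc (1/(lam*(t:ℝ)))/2 * ‖g t - E t‖^2 ≤ (1/(lam*(t:ℝ)))/2 * G^2 :=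
            mul_le_mul_of_nonneg_left hgE2 (by positivity)
        _ = G^2/(2*lam)*(1/(t:ℝ)) := by field_simp
    have hui' : ⟪g t, w t - wstar⟫ ≤ lam*(t:ℝ)/2*(a t) - lam*(t:ℝ)/2*(a (t+1))
        + G^2/(2*lam)*(1/(t:ℝ)) + 2*U*‖E t‖ := by
      rw [hui, e1]
      linarith [hBc, hil]
    have e2 : f t = lam*((t:ℝ)-1)/2 * a t := rfl
    have e3 : f (t+1) = lam*(t:ℝ)/2 * a (t+1) := by
      simp only [hf]
      push_cast
      ring_nf
    have e4 : a t = ‖w t - wstar‖^2 := rfl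
    have e4' : lam/2*‖w t - wstar‖^2 = lam/2*(a t) := by rw [e4]
    rw [hPt, hPt]
    have hfin : lam/2*‖w t‖^2 + max 0 (1 - y t*⟪w t, φ t⟫)
        - (lam/2*‖wstar‖^2 + max 0 (1 - y t*⟪wstar, φ t⟫))
        ≤ (f t - f (t+1)) + (G^2/(2*lam))*(1/(t:ℝ)) + 2*U*‖E t‖ := by
      have := le_trans hsc (by linarith [hui', e4'] :
        ⟪g t, w t - wstar⟫ - lam/2*‖w t - wstar‖^2
          ≤ lam*(t:ℝ)/2*(a t) - lam*(t:ℝ)/2*(a (t+1))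
            + G^2/(2*lam)*(1/(t:ℝ)) + 2*U*‖E t‖ - lam/2*(a t))
      rw [e2, e3]
      nlinarith [this, e4']
    linarith [hfin]
  -- summation
  have hsum := Finset.sum_le_sum key
  rw [Finset.sum_add_distrib, Finset.sum_add_distrib, telescope_Icc f N] at hsum
  have hf1 : f 1 = 0 := by simp [hf]
  have hfN : 0 ≤ f (N+1) := by
    have h1 : (0:ℝ) ≤ ((N+1:ℕ):ℝ) - 1 := by push_cast; linarith
    have h2 : (0:ℝ) ≤ a (N+1) := by simp only [ha]; positivity
    simp only [hf]
    exact mul_nonneg (div_nonneg (mul_nonneg hlam.le h1) (by norm_num)) h2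
  have hharm : ∑ t ∈ Finset.Icc 1 N, (G^2/(2*lam))*(1/(t:ℝ))
      ≤ (G^2/(2*lam))*(Real.log N + 1) := by
    rw [← Finset.mul_sum]
    exact mul_le_mul_of_nonneg_left (harmonic_le_log N hN) (by positivity)
  have hEsum : ∑ t ∈ Finset.Icc 1 N, 2*U*‖E t‖ = 2*U*∑ t ∈ Finset.Icc 1 N, ‖E t‖ := by
    rw [Finset.mul_sum]
  have hsub : ∑ t ∈ Finset.Icc 1 N, (Pt t (w t) - Pt t wstar)
      = (∑ t ∈ Finset.Icc 1 N, Pt t (w t)) - ∑ t ∈ Finset.Icc 1 N, Pt t wstar :=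
    Finset.sum_sub_distrib _ _
  rw [hsub, hf1, hEsum] at hsum
  have hfinal : (∑ t ∈ Finset.Icc 1 N, Pt t (w t)) - ∑ t ∈ Finset.Icc 1 N, Pt t wstar
      ≤ (G^2/(2*lam))*(Real.log N + 1) + 2*U*∑ t ∈ Finset.Icc 1 N, ‖E t‖ := by
    linarith [hsum, hharm, hfN]
  have hmul := mul_le_mul_of_nonneg_left hfinal (by positivity : (0:ℝ) ≤ 1/(N:ℝ))
  rw [hEbar, hG]
  have hNne : (N:ℝ) ≠ 0 := ne_of_gt hN0
  have heq : (1/(N:ℝ))*((((lam*U+2)^2)/(2*lam))*(Real.log N + 1)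
      + 2*U*∑ t ∈ Finset.Icc 1 N, ‖E t‖)
      = (lam*U+2)^2*(Real.log N + 1)/(2*lam*N)
        + 2*U*((1/(N:ℝ))*∑ t ∈ Finset.Icc 1 N, ‖E t‖) := by
    field_simp
  rw [heq] at hmul
  linarith [hmul]
end

section
/- Let H be a real inner product space, let N ≥ 1, and for each t ∈ {1,…,N} let φ_t ∈ H with ‖φ_t‖ ≤ 1 and y_t ∈ {−1, +1}. Let λ > 0 and η_t = 1/(λt). Let w_1 = 0 and w_{t+1} = w_t − η_t g_t + η_t E_t, where g_t = λw_t − (y_t φ_t if y_t⟨w_t, φ_t⟩ < 1, else 0) and E_t ∈ H with ‖E_t‖ ≤ 1. Then ‖w_t‖ ≤ 2/λ for all t ∈ {1,…,N+1}. -/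
open scoped RealInnerProductSpace

/-- The BSGD iterates with unit-bounded features and unit-bounded gradient
error stay in the ball of radius `2 / λ`. -/
theorem bsgd_iterate_norm_bound
    {H : Type*} [NormedAddCommGroup H] [InnerProductSpace ℝ H]
    (N : ℕ) (hN : 1 ≤ N)
    (φ : ℕ → H) (y : ℕ → ℝ) (lam : ℝ) (hlam : 0 < lam)
    (hφ : ∀ t, 1 ≤ t → t ≤ N → ‖φ t‖ ≤ 1)
    (hy : ∀ t, 1 ≤ t → t ≤ N → y t = -1 ∨ y t = 1)
    (η : ℕ → ℝ) (hη : ∀ t, η t = 1 / (lam * t))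
    (w : ℕ → H) (E : ℕ → H) (g : ℕ → H)
    (hg : ∀ t, 1 ≤ t → t ≤ N →
        g t = lam • w t - (if y t * ⟪w t, φ t⟫ < 1 then y t • φ t else 0))
    (hw1 : w 1 = 0)
    (hwrec : ∀ t, 1 ≤ t → t ≤ N → w (t + 1) = w t - η t • g t + η t • E t)
    (hE : ∀ t, 1 ≤ t → t ≤ N → ‖E t‖ ≤ 1) :
    ∀ t, 1 ≤ t → t ≤ N + 1 → ‖w t‖ ≤ 2 / lam := by
  intro t
  induction t with
  | zero => intro h; omega
  | succ t ih =>
    intro _ htN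
    rcases Nat.eq_zero_or_pos t with rfl | ht1
    · rw [hw1, norm_zero]; positivity
    have htN' : t ≤ N := by omega
    have hwt : ‖w t‖ ≤ 2 / lam := ih ht1 (by omega)
    have htpos : (0 : ℝ) < t := by exact_mod_cast ht1
    -- rewrite the recursion
    set c : H := if y t * ⟪w t, φ t⟫ < 1 then y t • φ t else 0 with hc
    have hcnorm : ‖c‖ ≤ 1 := by
      rw [hc]
      split
      · rw [norm_smul]
        rcases hy t ht1 htN' with h | h <;>
          simpa [h] using hφ t ht1 htN'
      · simp
    have hrec : w (t + 1) = (1 - 1 / (lam * t) * lam) • w t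
        + (1 / (lam * t)) • c + (1 / (lam * t)) • E t := by
      rw [hwrec t ht1 htN', hg t ht1 htN', hη, ← hc]
      rw [smul_sub, smul_smul, sub_smul, one_smul]
      abel
    have hηpos : (0 : ℝ) < 1 / (lam * t) := by positivity
    have hcoef : 0 ≤ 1 - 1 / (lam * t) * lam := by
      have : 1 / (lam * t) * lam = 1 / t := by
        field_simp
      rw [this]
      have : (1:ℝ) / t ≤ 1 := by
        rw [div_le_one htpos]; exact_mod_cast ht1
      linarith
    calc ‖w (t + 1)‖ ≤ (1 - 1 / (lam * t) * lam) * ‖w t‖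
          + (1 / (lam * t)) * ‖c‖ + (1 / (lam * t)) * ‖E t‖ := by
          rw [hrec]
          refine (norm_add_le _ _).trans ?_
          gcongr
          · refine (norm_add_le _ _).trans ?_
            rw [norm_smul, norm_smul, Real.norm_eq_abs, Real.norm_eq_abs,
              abs_of_nonneg hcoef, abs_of_pos hηpos]
          · rw [norm_smul, Real.norm_eq_abs, abs_of_pos hηpos]
      _ ≤ (1 - 1 / (lam * t) * lam) * (2 / lam)
          + (1 / (lam * t)) * 1 + (1 / (lam * t)) * 1 := by
          gcongr
          exact hE t ht1 htN'
      _ = 2 / lam := by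
          field_simp
          ring
end

section
/- Let H be a real inner product space, let N ≥ 1, and for each t ∈ {1,…,N} let φ_t ∈ H with ‖φ_t‖ ≤ 1 and y_t ∈ {−1, +1}. Let λ > 0 and define the batch objective P(w) = (λ/2)‖w‖² + (1/N)∑_{t=1}^N max(0, 1 − y_t⟨w, φ_t⟩). Then every minimizer w* of P satisfies ‖w*‖ ≤ 1/√λ. -/
open scoped RealInnerProductSpace

/-- Every minimizer of the regularized hinge-loss SVM objective has norm at
most `1 / √λ`. -/
theorem svm_minimizer_norm_bound
    {H : Type*} [NormedAddCommGroup H] [InnerProductSpace ℝ H]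
    (N : ℕ) (hN : 1 ≤ N)
    (φ : ℕ → H) (y : ℕ → ℝ) (lam : ℝ) (hlam : 0 < lam)
    (hφ : ∀ t, 1 ≤ t → t ≤ N → ‖φ t‖ ≤ 1)
    (hy : ∀ t, 1 ≤ t → t ≤ N → y t = -1 ∨ y t = 1)
    (P : H → ℝ)
    (hP : ∀ v, P v = lam / 2 * ‖v‖ ^ 2
        + (1 / (N : ℝ)) * ∑ t ∈ Finset.Icc 1 N, max 0 (1 - y t * ⟪v, φ t⟫))
    (wstar : H) (hstar : ∀ v, P wstar ≤ P v) :
    ‖wstar‖ ≤ 1 / Real.sqrt lam := by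
  have hN0 : (0:ℝ) < (N:ℝ) := by exact_mod_cast Nat.lt_of_lt_of_le Nat.zero_lt_one hN
  set a : ℝ := lam / 2 * ‖wstar‖ ^ 2 with ha
  set h : ℝ := (1 / (N : ℝ)) * ∑ t ∈ Finset.Icc 1 N, max 0 (1 - y t * ⟪wstar, φ t⟫) with hh
  have ha0 : 0 ≤ a := by positivity
  have hh0 : 0 ≤ h := by
    apply mul_nonneg (by positivity)
    exact Finset.sum_nonneg fun t _ => le_max_left _ _
  have hcard : (Finset.Icc 1 N).card = N := by
    rw [Nat.card_Icc]; omega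
  -- Key inequality: for all s ∈ [0,1), a*(1+s) ≤ 1 - h
  have key : ∀ s : ℝ, 0 ≤ s → s < 1 → a * (1 + s) ≤ 1 - h := by
    intro s hs0 hs1
    have hmain : a + h ≤ a * s ^ 2 + (s * h + (1 - s)) := by
      have h1 : P wstar ≤ P (s • wstar) := hstar _
      rw [hP, hP] at h1
      have hnorm : ‖s • wstar‖ ^ 2 = s ^ 2 * ‖wstar‖ ^ 2 := by
        rw [norm_smul, mul_pow]
        simp [abs_of_nonneg hs0]
      have hsum : ∑ t ∈ Finset.Icc 1 N, max 0 (1 - y t * ⟪s • wstar, φ t⟫)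
          ≤ ∑ t ∈ Finset.Icc 1 N, (s * max 0 (1 - y t * ⟪wstar, φ t⟫) + (1 - s)) := by
        apply Finset.sum_le_sum
        intro t _
        rw [real_inner_smul_left]
        have he : 1 - y t * (s * ⟪wstar, φ t⟫)
            = s * (1 - y t * ⟪wstar, φ t⟫) + (1 - s) := by ring
        rw [he]
        apply max_le
        · have := le_max_left (0:ℝ) (1 - y t * ⟪wstar, φ t⟫)
          nlinarith
        · have := le_max_right (0:ℝ) (1 - y t * ⟪wstar, φ t⟫)
          nlinarith
      have hsum2 : ∑ t ∈ Finset.Icc 1 N, (s * max 0 (1 - y t * ⟪wstar, φ t⟫) + (1 - s))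
          = s * (∑ t ∈ Finset.Icc 1 N, max 0 (1 - y t * ⟪wstar, φ t⟫)) + (N : ℝ) * (1 - s) := by
        rw [Finset.sum_add_distrib, Finset.mul_sum, Finset.sum_const, hcard, nsmul_eq_mul]
      have h2 : lam / 2 * ‖s • wstar‖ ^ 2
            + (1 / (N : ℝ)) * ∑ t ∈ Finset.Icc 1 N, max 0 (1 - y t * ⟪s • wstar, φ t⟫)
          ≤ a * s ^ 2 + (s * h + (1 - s)) := by
        rw [hnorm]
        have h3 : (1 / (N : ℝ)) * ∑ t ∈ Finset.Icc 1 N, max 0 (1 - y t * ⟪s • wstar, φ t⟫)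
            ≤ s * h + (1 - s) := by
          calc (1 / (N : ℝ)) * ∑ t ∈ Finset.Icc 1 N, max 0 (1 - y t * ⟪s • wstar, φ t⟫)
              ≤ (1 / (N : ℝ)) * (s * (∑ t ∈ Finset.Icc 1 N, max 0 (1 - y t * ⟪wstar, φ t⟫))
                  + (N : ℝ) * (1 - s)) := by
                apply mul_le_mul_of_nonneg_left _ (by positivity)
                rw [← hsum2]; exact hsum
            _ = s * h + (1 - s) := by
                rw [hh]; field_simp
        have h4 : lam / 2 * (s ^ 2 * ‖wstar‖ ^ 2) = a * s ^ 2 := by rw [ha]; ring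
        linarith
      calc a + h = P wstar := by rw [hP]
        _ ≤ _ := hstar _
        _ = lam / 2 * ‖s • wstar‖ ^ 2
            + (1 / (N : ℝ)) * ∑ t ∈ Finset.Icc 1 N, max 0 (1 - y t * ⟪s • wstar, φ t⟫) := hP _
        _ ≤ _ := h2
    -- from hmain: a*(1-s^2) ≤ (1-s)*(1-h); divide by (1-s) > 0
    have hpos : 0 < 1 - s := by linarith
    have h2 : (1 - s) * (a * (1 + s)) ≤ (1 - s) * (1 - h) := by nlinarith [hmain]
    exact le_of_mul_le_mul_left h2 hpos
  -- take s → 1: 2a ≤ 1 - h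
  have h2a : 2 * a ≤ 1 - h := by
    by_contra hc
    push_neg at hc
    have hkey0 := key 0 le_rfl one_pos
    have hapos : 0 < a := by
      rcases lt_or_eq_of_le ha0 with h' | h'
      · exact h'
      · exfalso; rw [← h'] at hkey0 hc; linarith
    set d : ℝ := 2 * a + h - 1 with hd
    have hdpos : 0 < d := by rw [hd]; linarith
    set s : ℝ := max 0 (1 - d / (2 * a)) with hs
    have hs0 : 0 ≤ s := le_max_left _ _
    have hs1 : s < 1 := by
      rw [hs]
      apply max_lt one_pos
      have : 0 < d / (2 * a) := div_pos hdpos (by linarith)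
      linarith
    have hk := key s hs0 hs1
    rcases le_or_gt (1 - d / (2 * a)) 0 with hcase | hcase
    · -- s = 0, so a ≤ 1 - h = 2a - d, i.e. d ≤ a; but 1 - d/(2a) ≤ 0 means 2a ≤ d
      have hseq : s = 0 := by rw [hs, max_eq_left hcase]
      rw [hseq] at hk
      have h2ad : 2 * a ≤ d := by
        have h1 : 1 ≤ d / (2 * a) := by linarith
        calc 2 * a = 1 * (2 * a) := (one_mul _).symm
          _ ≤ d / (2 * a) * (2 * a) := by
              apply mul_le_mul_of_nonneg_right h1; linarith
          _ = d := by field_simp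
      linarith [hk, h2ad, hd.ge, hd.le, hapos]
    · have hseq : s = 1 - d / (2 * a) := by rw [hs, max_eq_right hcase.le]
      rw [hseq] at hk
      have hda : d / (2 * a) * (2 * a) = d := by field_simp
      nlinarith [hk]
  -- conclude
  have hnsq : lam * ‖wstar‖ ^ 2 ≤ 1 := by
    have : 2 * (lam / 2 * ‖wstar‖ ^ 2) ≤ 1 := by linarith
    linarith
  have hwsq : ‖wstar‖ ^ 2 ≤ 1 / lam := by
    rw [le_div_iff₀ hlam]; linarith [hnsq]
  calc ‖wstar‖ = Real.sqrt (‖wstar‖ ^ 2) := by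
        rw [Real.sqrt_sq (norm_nonneg _)]
    _ ≤ Real.sqrt (1 / lam) := Real.sqrt_le_sqrt hwsq
    _ = 1 / Real.sqrt lam := by
        rw [one_div, Real.sqrt_inv, one_div]
end

section
/- Let H be a real inner product space, λ > 0, G ≥ 0, U ≥ 0, and N ≥ 1. For t ∈ {1,…,N} let f_t : H → ℝ, g_t, E_t ∈ H, and w_t ∈ H satisfy: (i) w_{t+1} = w_t − (1/(λt))(g_t − E_t); (ii) for all v ∈ H, f_t(v) ≥ f_t(w_t) + ⟨g_t, v − w_t⟩ + (λ/2)‖v − w_t‖²; (iii) ‖g_t − E_t‖ ≤ G; (iv) ‖w_t‖ ≤ U. Then for every u ∈ H with ‖u‖ ≤ U, (1/N)∑_{t=1}^N f_t(w_t) − (1/N)∑_{t=1}^N f_t(u) ≤ G²(ln N + 1)/(2λN) + 2U·(1/N)∑_{t=1}^N ‖E_t‖. -/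
open scoped RealInnerProductSpace

lemma my_harmonic_le_log_add_one (N : ℕ) (hN : 1 ≤ N) :
    ∑ t ∈ Finset.Icc 1 N, (1 : ℝ) / t ≤ Real.log N + 1 := by
  induction N with
  | zero => omega
  | succ n ih =>
    rcases Nat.lt_or_ge n 1 with h | hn
    · have : n = 0 := by omega
      subst this
      simp
    · have hnp : (0:ℝ) < n := by exact_mod_cast hn
      have hnp1 : (0:ℝ) < (n:ℝ) + 1 := by linarith
      have hlog1 : Real.log ((n:ℝ)/((n:ℝ)+1)) ≤ (n:ℝ)/((n:ℝ)+1) - 1 :=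
        Real.log_le_sub_one_of_pos (by positivity)
      have hlogdiv : Real.log ((n:ℝ)/((n:ℝ)+1)) = Real.log n - Real.log ((n:ℝ)+1) :=
        Real.log_div (ne_of_gt hnp) (ne_of_gt hnp1)
      have hfrac : (n:ℝ)/((n:ℝ)+1) - 1 = -(1/((n:ℝ)+1)) := by field_simp; ring
      have h1 : (1:ℝ)/((n:ℝ)+1) ≤ Real.log ((n:ℝ)+1) - Real.log n := by
        rw [hlogdiv, hfrac] at hlog1; linarith
      rw [Finset.sum_Icc_succ_top (by omega : 1 ≤ n+1)]
      have h2 := ih hn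
      push_cast
      linarith

/-- Perturbed online subgradient descent for λ-strongly convex objectives:
SGD with learning rate `1/(λt)` and gradient errors `E t` has average regret
at most `G²(ln N + 1)/(2λN)` plus `2U` times the average error norm. -/
theorem perturbed_ogd_strongly_convex_regret
    {H : Type*} [NormedAddCommGroup H] [InnerProductSpace ℝ H]
    (lam G U : ℝ) (hlam : 0 < lam) (hG : 0 ≤ G) (hU : 0 ≤ U)
    (N : ℕ) (hN : 1 ≤ N)
    (f : ℕ → H → ℝ) (g E w : ℕ → H)
    (hrec : ∀ t, 1 ≤ t → t ≤ N → w (t + 1) = w t - (1 / (lam * t)) • (g t - E t))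
    (hconv : ∀ t, 1 ≤ t → t ≤ N → ∀ v : H,
        f t v ≥ f t (w t) + ⟪g t, v - w t⟫ + lam / 2 * ‖v - w t‖ ^ 2)
    (hGbound : ∀ t, 1 ≤ t → t ≤ N → ‖g t - E t‖ ≤ G)
    (hWbound : ∀ t, 1 ≤ t → t ≤ N → ‖w t‖ ≤ U) :
    ∀ u : H, ‖u‖ ≤ U →
      (1 / (N : ℝ)) * ∑ t ∈ Finset.Icc 1 N, f t (w t)
        - (1 / (N : ℝ)) * ∑ t ∈ Finset.Icc 1 N, f t u
      ≤ G ^ 2 * (Real.log N + 1) / (2 * lam * N)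
        + 2 * U * ((1 / (N : ℝ)) * ∑ t ∈ Finset.Icc 1 N, ‖E t‖) := by
  intro u hu
  have hN0 : (0:ℝ) < N := by exact_mod_cast hN
  set a : ℕ → ℝ := fun k => lam * k / 2 * ‖w (k+1) - u‖^2 with ha
  have key : ∀ t ∈ Finset.Icc 1 N,
      f t (w t) - f t u ≤ (a (t-1) - a t) + G^2/(2*lam*t) + 2*U*‖E t‖ := by
    intro t ht
    obtain ⟨ht1, ht2⟩ := Finset.mem_Icc.mp ht
    have htR : (1:ℝ) ≤ (t:ℝ) := by exact_mod_cast ht1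
    have ht0 : (0:ℝ) < t := by linarith
    have hlt : (0:ℝ) < lam * t := by positivity
    have h1 : w (t+1) - u = (w t - u) - (1/(lam*t)) • (g t - E t) := by
      rw [hrec t ht1 ht2, sub_right_comm]
    have hexp : ‖w (t+1) - u‖^2
        = ‖w t - u‖^2 - 2*((1/(lam*t)) * ⟪g t - E t, w t - u⟫)
          + (1/(lam*t))^2 * ‖g t - E t‖^2 := by
      rw [h1, norm_sub_sq_real, real_inner_smul_right, real_inner_comm, norm_smul,
        Real.norm_eq_abs, abs_of_pos (by positivity), mul_pow]
    have hexp2 : (lam*(t:ℝ)) * ‖w (t+1) - u‖^2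
        = (lam*(t:ℝ)) * ‖w t - u‖^2 - 2*⟪g t - E t, w t - u⟫
          + (1/(lam*(t:ℝ))) * ‖g t - E t‖^2 := by
      rw [hexp]
      field_simp
    have hsplit : ⟪g t, w t - u⟫ = ⟪g t - E t, w t - u⟫ + ⟪E t, w t - u⟫ := by
      rw [inner_sub_left]; ring
    have hE2 : ⟪E t, w t - u⟫ ≤ 2*U*‖E t‖ := by
      have h3 := real_inner_le_norm (E t) (w t - u)
      have h4 : ‖w t - u‖ ≤ 2*U := by
        have := norm_sub_le (w t) u
        have := hWbound t ht1 ht2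
        linarith
      nlinarith [norm_nonneg (E t)]
    have hGsq : ‖g t - E t‖^2 ≤ G^2 := by
      nlinarith [hGbound t ht1 ht2, norm_nonneg (g t - E t)]
    have hD0 : (0:ℝ) ≤ 1/(lam*(t:ℝ)) := by positivity
    have hCD : (1/(lam*(t:ℝ))) * ‖g t - E t‖^2 ≤ (1/(lam*(t:ℝ))) * G^2 :=
      mul_le_mul_of_nonneg_left hGsq hD0
    have hconv' := hconv t ht1 ht2 u
    have h3 : ⟪g t, u - w t⟫ = -⟪g t, w t - u⟫ := by
      rw [← inner_neg_right, neg_sub]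
    have h4 : ‖u - w t‖ = ‖w t - u‖ := norm_sub_rev _ _
    have hat : a (t-1) = lam * ((t:ℝ)-1)/2 * ‖w t - u‖^2 := by
      have h5 : t - 1 + 1 = t := Nat.sub_add_cancel ht1
      have h6 : ((t-1:ℕ):ℝ) = (t:ℝ) - 1 := by
        push_cast [ht1]; ring
      simp only [ha, h5, h6]
    have hatt : a t = lam * (t:ℝ)/2 * ‖w (t+1) - u‖^2 := rfl
    have hGdiv : G^2/(2*lam*(t:ℝ)) = (1/(lam*(t:ℝ))) * G^2 / 2 := by
      ring
    rw [hat, hatt, hGdiv]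
    rw [h3, h4] at hconv'
    linarith [hconv', hexp2, hsplit, hE2, hCD]
  have hsum := Finset.sum_le_sum key
  have htel : ∑ t ∈ Finset.Icc 1 N, (a (t-1) - a t) = a 0 - a N := by
    have h7 : ∑ t ∈ Finset.Icc 1 N, (a (t-1) - a t)
        = ∑ i ∈ Finset.range N, (a i - a (i+1)) := by
      rw [show Finset.Icc 1 N = Finset.Ico 1 (N+1) from by rw [Finset.Ico_add_one_right_eq_Icc],
        Finset.sum_Ico_eq_sum_range]
      simp
      exact Finset.sum_congr rfl fun x _ => by rw [Nat.add_comm]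
    rw [h7, Finset.sum_range_sub']
  have ha0 : a 0 = 0 := by simp [ha]
  have haN : 0 ≤ a N := by
    have : (0:ℝ) ≤ (N:ℝ) := le_of_lt hN0
    simp only [ha]
    positivity
  have hGsum : ∑ t ∈ Finset.Icc 1 N, G^2/(2*lam*(t:ℝ))
      ≤ G^2/(2*lam) * (Real.log N + 1) := by
    have h8 : ∑ t ∈ Finset.Icc 1 N, G^2/(2*lam*(t:ℝ))
        = G^2/(2*lam) * ∑ t ∈ Finset.Icc 1 N, (1:ℝ)/t := by
      rw [Finset.mul_sum]
      apply Finset.sum_congr rfl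
      intro t _
      rw [mul_one_div, div_div]
    rw [h8]
    apply mul_le_mul_of_nonneg_left (my_harmonic_le_log_add_one N hN) (by positivity)
  have main : ∑ t ∈ Finset.Icc 1 N, (f t (w t) - f t u)
      ≤ G^2*(Real.log N + 1)/(2*lam) + 2*U*∑ t ∈ Finset.Icc 1 N, ‖E t‖ := by
    have h9 : ∑ t ∈ Finset.Icc 1 N, ((a (t-1) - a t) + G^2/(2*lam*(t:ℝ)) + 2*U*‖E t‖)
        = (∑ t ∈ Finset.Icc 1 N, (a (t-1) - a t))
          + (∑ t ∈ Finset.Icc 1 N, G^2/(2*lam*(t:ℝ)))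
          + 2*U*∑ t ∈ Finset.Icc 1 N, ‖E t‖ := by
      rw [Finset.sum_add_distrib, Finset.sum_add_distrib, Finset.mul_sum]
    rw [h9, htel, ha0] at hsum
    have : G^2/(2*lam) * (Real.log N + 1) = G^2*(Real.log N + 1)/(2*lam) := by ring
    linarith
  rw [Finset.sum_sub_distrib] at main
  have h1N : (0:ℝ) ≤ 1/(N:ℝ) := by positivity
  have hmul := mul_le_mul_of_nonneg_left main h1N
  rw [mul_sub] at hmul
  have heq1 : (1/(N:ℝ)) * (G^2*(Real.log N + 1)/(2*lam) + 2*U*∑ t ∈ Finset.Icc 1 N, ‖E t‖)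
      = G^2*(Real.log N + 1)/(2*lam*N) + 2*U*((1/(N:ℝ))*∑ t ∈ Finset.Icc 1 N, ‖E t‖) := by
    field_simp
  linarith [heq1.le, heq1.ge]
end

section
/- Let d ≥ 1, γ > 0, x_i ≠ x_j points of ℝ^d (Euclidean space), and α_i, α_j ∈ ℝ with α_i ≠ 0 and α_j ≠ 0. Define m : ℝ^d → ℝ by m(z) = α_i·exp(−γ‖z − x_i‖²) + α_j·exp(−γ‖z − x_j‖²). If z ∈ ℝ^d is a critical point of m (i.e., the derivative of m at z is zero), then there exists h ∈ ℝ such that z = h·x_i + (1 − h)·x_j. -/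
open RealInnerProductSpace

lemma gaussian_term_hasFDerivAt {d : ℕ} (γ : ℝ) (x z : EuclideanSpace ℝ (Fin d)) :
    HasFDerivAt (fun w => Real.exp (-γ * ‖w - x‖ ^ 2))
      ((Real.exp (-γ * ‖z - x‖ ^ 2) * (-2 * γ)) • (innerSL ℝ (z - x))) z := by
  have h1 : HasFDerivAt (fun w : EuclideanSpace ℝ (Fin d) => w - x)
      (ContinuousLinearMap.id ℝ _) z := (hasFDerivAt_id z).sub_const x
  have h2 := (h1.inner ℝ h1).const_mul (-γ)
  have h3 : (fun w : EuclideanSpace ℝ (Fin d) => -γ * ⟪w - x, w - x⟫)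
      = fun w => -γ * ‖w - x‖ ^ 2 := by
    funext w; rw [real_inner_self_eq_norm_sq]
  rw [h3] at h2
  have h4 := h2.exp
  refine h4.congr_fderiv ?_
  ext w
  simp only [ContinuousLinearMap.smul_apply, ContinuousLinearMap.coe_comp',
    Function.comp_apply, ContinuousLinearMap.prod_apply, ContinuousLinearMap.id_apply,
    fderivInnerCLM_apply, innerSL_apply_apply, smul_eq_mul, real_inner_comm w (z - x)]
  ring

/-- Any critical point of `z ↦ αᵢ exp(-γ‖z-xᵢ‖²) + αⱼ exp(-γ‖z-xⱼ‖²)` lies on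
the line through `xᵢ` and `xⱼ`. -/
theorem gaussian_merge_critical_point_on_line
    (d : ℕ) (hd : 1 ≤ d) (γ : ℝ) (hγ : 0 < γ)
    (xi xj : EuclideanSpace ℝ (Fin d)) (hx : xi ≠ xj)
    (αi αj : ℝ) (hαi : αi ≠ 0) (hαj : αj ≠ 0)
    (m : EuclideanSpace ℝ (Fin d) → ℝ)
    (hm : ∀ z, m z = αi * Real.exp (-γ * ‖z - xi‖ ^ 2)
        + αj * Real.exp (-γ * ‖z - xj‖ ^ 2))
    (z : EuclideanSpace ℝ (Fin d)) (hz : fderiv ℝ m z = 0) :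
    ∃ h : ℝ, z = h • xi + (1 - h) • xj := by
  set ci : ℝ := αi * (Real.exp (-γ * ‖z - xi‖ ^ 2) * (-2 * γ)) with hci
  set cj : ℝ := αj * (Real.exp (-γ * ‖z - xj‖ ^ 2) * (-2 * γ)) with hcj
  have hcine : ci ≠ 0 := by
    apply mul_ne_zero hαi (mul_ne_zero (Real.exp_ne_zero _) (by nlinarith))
  have hcjne : cj ≠ 0 := by
    apply mul_ne_zero hαj (mul_ne_zero (Real.exp_ne_zero _) (by nlinarith))
  have hMeq : m = fun w => αi * Real.exp (-γ * ‖w - xi‖ ^ 2)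
      + αj * Real.exp (-γ * ‖w - xj‖ ^ 2) := funext hm
  have hD : HasFDerivAt m (ci • (innerSL ℝ (z - xi)) + cj • (innerSL ℝ (z - xj))) z := by
    rw [hMeq]
    have := ((gaussian_term_hasFDerivAt γ xi z).const_mul αi).add
      ((gaussian_term_hasFDerivAt γ xj z).const_mul αj)
    refine this.congr_fderiv ?_
    rw [hci, hcj, smul_smul, smul_smul]
  have hD0 : (ci • (innerSL ℝ (z - xi)) + cj • (innerSL ℝ (z - xj)) :
      EuclideanSpace ℝ (Fin d) →L[ℝ] ℝ) = 0 := by rw [← hD.fderiv, hz]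
  have hv : ci • (z - xi) + cj • (z - xj) = 0 := by
    have happ : ∀ w, ⟪ci • (z - xi) + cj • (z - xj), w⟫ = 0 := by
      intro w
      have := congrFun (congrArg DFunLike.coe hD0) w
      simp only [ContinuousLinearMap.add_apply, ContinuousLinearMap.smul_apply,
        innerSL_apply_apply, ContinuousLinearMap.zero_apply, smul_eq_mul] at this
      rw [inner_add_left, real_inner_smul_left, real_inner_smul_left]
      exact this
    have := happ (ci • (z - xi) + cj • (z - xj))
    rwa [inner_self_eq_zero] at this
  have hsum : ci + cj ≠ 0 := by
    intro h0
    have hcj' : cj = -ci := by linarith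
    rw [hcj'] at hv
    have : ci • (xj - xi) = 0 := by
      rw [← hv]; module
    rcases smul_eq_zero.mp this with h | h
    · exact hcine h
    · exact hx (by rwa [sub_eq_zero, eq_comm] at h)
  refine ⟨ci / (ci + cj), ?_⟩
  have hz' : (ci + cj) • z = ci • xi + cj • xj := by
    have : ci • z - ci • xi + (cj • z - cj • xj) = 0 := by
      rw [← smul_sub, ← smul_sub]; exact hv
    rw [add_smul]; linear_combination (norm := module) this
  have := congrArg (fun v => (ci + cj)⁻¹ • v) hz'
  simp only [smul_smul, inv_mul_cancel₀ hsum, one_smul, smul_add] at this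
  rw [this]
  have h1 : 1 - ci / (ci + cj) = cj / (ci + cj) := by field_simp; ring
  rw [h1, div_eq_inv_mul, div_eq_inv_mul, mul_smul, mul_smul]
end

section
/- Let d ≥ 1, γ > 0, x_i ≠ x_j points of ℝ^d (Euclidean space), and α_i > 0, α_j > 0. Define m : ℝ^d → ℝ by m(z) = α_i·exp(−γ‖z − x_i‖²) + α_j·exp(−γ‖z − x_j‖²). Then m attains a global maximum on ℝ^d, and every global maximizer z* of m has the form z* = h·x_i + (1 − h)·x_j for some h with 0 < h < 1. -/
open Filter Real
open scoped RealInnerProductSpace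

private lemma gauss_merge_exists (d : ℕ) (γ : ℝ) (hγ : 0 < γ)
    (xi xj : EuclideanSpace ℝ (Fin d))
    (αi αj : ℝ) (hαi : 0 < αi) (hαj : 0 < αj)
    (m : EuclideanSpace ℝ (Fin d) → ℝ)
    (hm : ∀ z, m z = αi * Real.exp (-γ * ‖z - xi‖ ^ 2)
        + αj * Real.exp (-γ * ‖z - xj‖ ^ 2)) :
    (∃ z : EuclideanSpace ℝ (Fin d), ∀ v, m v ≤ m z) := by
  have hmfun : m = fun z => αi * Real.exp (-γ * ‖z - xi‖ ^ 2)
      + αj * Real.exp (-γ * ‖z - xj‖ ^ 2) := funext hm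
  have hcont : Continuous m := by rw [hmfun]; fun_prop
  have hterm : ∀ x : EuclideanSpace ℝ (Fin d),
      Tendsto (fun z : EuclideanSpace ℝ (Fin d) => Real.exp (-γ * ‖z - x‖ ^ 2))
        (cocompact _) (nhds 0) := by
    intro x
    have h1 : Tendsto (fun z : EuclideanSpace ℝ (Fin d) => ‖z - x‖)
        (cocompact _) atTop := by
      have := tendsto_norm_cocompact_atTop (E := EuclideanSpace ℝ (Fin d))
      apply tendsto_atTop_mono (f := fun z : EuclideanSpace ℝ (Fin d) => ‖z‖ - ‖x‖)
      · intro z; have := norm_sub_norm_le z x; linarith [norm_sub_rev z x]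
      · exact this.atTop_add tendsto_const_nhds
    have h2 : Tendsto (fun z : EuclideanSpace ℝ (Fin d) => -γ * ‖z - x‖ ^ 2)
        (cocompact _) atBot := by
      have : Tendsto (fun z : EuclideanSpace ℝ (Fin d) => ‖z - x‖ ^ 2)
          (cocompact _) atTop := (tendsto_pow_atTop two_ne_zero).comp h1
      exact this.const_mul_atTop_of_neg (by linarith)
    exact Real.tendsto_exp_atBot.comp h2
  have htend : Tendsto m (cocompact _) (nhds 0) := by
    rw [hmfun]
    have := ((hterm xi).const_mul αi).add ((hterm xj).const_mul αj)
    simpa using this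
  have hev : ∀ᶠ z in cocompact (EuclideanSpace ℝ (Fin d)), m z ≤ m xi := by
    have hmi : αi ≤ m xi := by
      rw [hm]
      have h0 : xi - xi = 0 := sub_self xi
      rw [h0]
      simp only [norm_zero]
      have h1 : -γ * (0:ℝ) ^ 2 = 0 := by ring
      rw [h1, Real.exp_zero, mul_one]
      nlinarith [Real.exp_pos (-γ * ‖xi - xj‖ ^ 2)]
    filter_upwards [htend.eventually (eventually_lt_nhds hαi)] with z hz
    linarith
  exact hcont.exists_forall_ge' xi hev

private lemma gauss_merge_char (d : ℕ) (γ : ℝ) (hγ : 0 < γ)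
    (xi xj : EuclideanSpace ℝ (Fin d)) (hx : xi ≠ xj)
    (αi αj : ℝ) (hαi : 0 < αi) (hαj : 0 < αj)
    (m : EuclideanSpace ℝ (Fin d) → ℝ)
    (hm : ∀ z, m z = αi * Real.exp (-γ * ‖z - xi‖ ^ 2)
        + αj * Real.exp (-γ * ‖z - xj‖ ^ 2))
    (zstar : EuclideanSpace ℝ (Fin d)) (hmax : ∀ v, m v ≤ m zstar) :
      ∃ h : ℝ, 0 < h ∧ h < 1 ∧ zstar = h • xi + (1 - h) • xj := by
  set u : EuclideanSpace ℝ (Fin d) := xi - xj with hu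
  have hu0 : u ≠ 0 := sub_ne_zero.mpr hx
  set c : ℝ := ‖u‖ ^ 2 with hcdef
  have hc : 0 < c := by have := norm_pos_iff.mpr hu0; positivity
  set h : ℝ := (inner ℝ (zstar - xj) u : ℝ) / c with hhdef
  set p : EuclideanSpace ℝ (Fin d) := h • xi + (1 - h) • xj with hpdef
  have hpxi : p - xi = (h - 1) • u := by rw [hpdef, hu]; module
  have hpxj : p - xj = h • u := by rw [hpdef, hu]; module
  set w : EuclideanSpace ℝ (Fin d) := zstar - p with hwdef
  have horth : (inner ℝ w u : ℝ) = 0 := by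
    have hwp : w = (zstar - xj) - h • u := by rw [hwdef, hpdef, hu]; module
    rw [hwp, inner_sub_left, real_inner_smul_left, hhdef,
      real_inner_self_eq_norm_sq, ← hcdef]
    field_simp
    ring
  have hpyth : ∀ x : EuclideanSpace ℝ (Fin d), ∀ t : ℝ, p - x = t • u →
      ‖zstar - x‖ ^ 2 = ‖w‖ ^ 2 + ‖p - x‖ ^ 2 := by
    intro x t ht
    have hzx : zstar - x = w + (p - x) := by rw [hwdef]; module
    rw [hzx, norm_add_sq_real, ht, real_inner_smul_right, horth]
    ring
  have hzi := hpyth xi (h - 1) hpxi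
  have hzj := hpyth xj h hpxj
  -- step A: zstar = p
  have hzp : zstar = p := by
    by_contra hne
    have hwne : w ≠ 0 := by rw [hwdef]; exact sub_ne_zero.mpr hne
    have hw : 0 < ‖w‖ ^ 2 := pow_pos (norm_pos_iff.mpr hwne) 2
    have h1 : m zstar < m p := by
      rw [hm, hm, hzi, hzj]
      have e1 : Real.exp (-γ * (‖w‖ ^ 2 + ‖p - xi‖ ^ 2)) < Real.exp (-γ * ‖p - xi‖ ^ 2) := by
        apply Real.exp_lt_exp.mpr; nlinarith
      have e2 : Real.exp (-γ * (‖w‖ ^ 2 + ‖p - xj‖ ^ 2)) < Real.exp (-γ * ‖p - xj‖ ^ 2) := by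
        apply Real.exp_lt_exp.mpr; nlinarith
      nlinarith
    exact absurd (hmax p) (not_le.mpr h1)
  -- step B: the restriction to the line
  set g : ℝ → ℝ := fun t => αi * Real.exp (-γ * ((t - 1) ^ 2 * c))
      + αj * Real.exp (-γ * (t ^ 2 * c)) with hgdef
  have hgval : ∀ t : ℝ, g t = m (t • xi + (1 - t) • xj) := by
    intro t
    have e1 : t • xi + (1 - t) • xj - xi = (t - 1) • u := by rw [hu]; module
    have e2 : t • xi + (1 - t) • xj - xj = t • u := by rw [hu]; module
    rw [hm, e1, e2, norm_smul, norm_smul, hgdef]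
    simp only [Real.norm_eq_abs, mul_pow, sq_abs, hcdef]
  have hloc : IsLocalMax g h := by
    apply Filter.Eventually.of_forall
    intro t
    rw [hgval t, hgval h]
    have : h • xi + (1 - h) • xj = zstar := hzp.symm ▸ hpdef.symm
    rw [this]
    exact hmax _
  clear_value u c h p w
  clear hu hhdef hpxi hpxj hwdef horth hpyth hzi hzj hcdef
  -- step C: derivative vanishes
  have hd1 : HasDerivAt (fun t : ℝ => -γ * ((t - 1) ^ 2 * c))
      (-γ * (2 * (h - 1) * c)) h := by
    have := (((hasDerivAt_id h).sub_const 1).pow 2).mul_const c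
    have := this.const_mul (-γ)
    exact this.congr_deriv (by simp only [id_eq]; push_cast; ring)
  have hd2 : HasDerivAt (fun t : ℝ => -γ * (t ^ 2 * c))
      (-γ * (2 * h * c)) h := by
    have := (((hasDerivAt_id h)).pow 2).mul_const c
    have := this.const_mul (-γ)
    exact this.congr_deriv (by simp only [id_eq]; push_cast; ring)
  have hdg : HasDerivAt g
      (αi * (Real.exp (-γ * ((h - 1) ^ 2 * c)) * (-γ * (2 * (h - 1) * c)))
        + αj * (Real.exp (-γ * (h ^ 2 * c)) * (-γ * (2 * h * c)))) h := by
    exact ((hd1.exp).const_mul αi).add ((hd2.exp).const_mul αj)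
  have hzero := hloc.deriv_eq_zero
  rw [hdg.deriv] at hzero
  have hP : 0 < αi * Real.exp (-γ * ((h - 1) ^ 2 * c)) * (γ * c) := by positivity
  have hQ : 0 < αj * Real.exp (-γ * (h ^ 2 * c)) * (γ * c) := by positivity
  have hh0 : 0 < h := by nlinarith
  have hh1 : h < 1 := by nlinarith
  rw [hpdef] at hzp; exact ⟨h, hh0, hh1, hzp⟩

/-- For positive coefficients, `z ↦ αᵢ exp(-γ‖z-xᵢ‖²) + αⱼ exp(-γ‖z-xⱼ‖²)`
attains a global maximum, and every global maximizer is a strict convex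
combination `h • xᵢ + (1-h) • xⱼ` with `0 < h < 1`. -/
theorem gaussian_merge_maximizer_strict_convex_combination
    (d : ℕ) (hd : 1 ≤ d) (γ : ℝ) (hγ : 0 < γ)
    (xi xj : EuclideanSpace ℝ (Fin d)) (hx : xi ≠ xj)
    (αi αj : ℝ) (hαi : 0 < αi) (hαj : 0 < αj)
    (m : EuclideanSpace ℝ (Fin d) → ℝ)
    (hm : ∀ z, m z = αi * Real.exp (-γ * ‖z - xi‖ ^ 2)
        + αj * Real.exp (-γ * ‖z - xj‖ ^ 2)) :
    (∃ z : EuclideanSpace ℝ (Fin d), ∀ v, m v ≤ m z) ∧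
    (∀ zstar : EuclideanSpace ℝ (Fin d), (∀ v, m v ≤ m zstar) →
      ∃ h : ℝ, 0 < h ∧ h < 1 ∧ zstar = h • xi + (1 - h) • xj) :=
  ⟨gauss_merge_exists d γ hγ xi xj αi αj hαi hαj m hm,
   fun zstar hmax => gauss_merge_char d γ hγ xi xj hx αi αj hαi hαj m hm zstar hmax⟩
end

section
/- Let d ≥ 1, γ > 0, x_i ≠ x_j points of ℝ^d (Euclidean space), and α_i > 0, α_j > 0. Define m : ℝ^d → ℝ by m(z) = α_i·exp(−γ‖z − x_i‖²) + α_j·exp(−γ‖z − x_j‖²). For any z ∈ ℝ^d, let p be the orthogonal projection of z onto the affine line {h·x_i + (1 − h)·x_j : h ∈ ℝ}. Then m(z) ≤ m(p), and the inequality is strict whenever z ≠ p. -/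
open scoped RealInnerProductSpace

/-- Projecting a candidate point onto the line through `xᵢ` and `xⱼ` cannot
decrease `m(z) = αᵢ exp(-γ‖z-xᵢ‖²) + αⱼ exp(-γ‖z-xⱼ‖²)` when both
coefficients are positive, and strictly increases it off the line. -/
theorem gaussian_merge_projection_increases
    (d : ℕ) (hd : 1 ≤ d) (γ : ℝ) (hγ : 0 < γ)
    (xi xj : EuclideanSpace ℝ (Fin d)) (hx : xi ≠ xj)
    (αi αj : ℝ) (hαi : 0 < αi) (hαj : 0 < αj)
    (m : EuclideanSpace ℝ (Fin d) → ℝ)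
    (hm : ∀ v, m v = αi * Real.exp (-γ * ‖v - xi‖ ^ 2)
        + αj * Real.exp (-γ * ‖v - xj‖ ^ 2))
    (z p : EuclideanSpace ℝ (Fin d))
    -- `p` is the orthogonal projection of `z` onto the affine line
    -- `{h • xᵢ + (1-h) • xⱼ : h ∈ ℝ}`:
    (hp_mem : ∃ h : ℝ, p = h • xi + (1 - h) • xj)
    (hp_perp : ⟪z - p, xi - xj⟫ = 0) :
    m z ≤ m p ∧ (z ≠ p → m z < m p) := by
  obtain ⟨h, hph⟩ := hp_mem
  have hpi : p - xi = (1 - h) • (xj - xi) := by rw [hph]; module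
  have hpj : p - xj = h • (xi - xj) := by rw [hph]; module
  have hji : ⟪z - p, xj - xi⟫ = 0 := by
    have : xj - xi = -(xi - xj) := by abel
    rw [this, inner_neg_right, hp_perp, neg_zero]
  have hperpi : ⟪z - p, p - xi⟫ = 0 := by
    rw [hpi, inner_smul_right, hji, mul_zero]
  have hperpj : ⟪z - p, p - xj⟫ = 0 := by
    rw [hpj, inner_smul_right, hp_perp, mul_zero]
  have pyth : ∀ v : EuclideanSpace ℝ (Fin d), ⟪z - p, p - v⟫ = 0 →
      ‖z - v‖ ^ 2 = ‖z - p‖ ^ 2 + ‖p - v‖ ^ 2 := by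
    intro v hv
    have : z - v = (z - p) + (p - v) := by abel
    rw [this, norm_add_sq_real, hv]; ring
  have hi := pyth xi hperpi
  have hj := pyth xj hperpj
  have hsplit : ∀ v : EuclideanSpace ℝ (Fin d),
      ‖z - v‖ ^ 2 = ‖z - p‖ ^ 2 + ‖p - v‖ ^ 2 →
      Real.exp (-γ * ‖z - v‖ ^ 2)
        = Real.exp (-γ * ‖p - v‖ ^ 2) * Real.exp (-γ * ‖z - p‖ ^ 2) := by
    intro v hv
    rw [← Real.exp_add, hv]; ring_nf
  have ei := hsplit xi hi
  have ej := hsplit xj hj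
  have hle : Real.exp (-γ * ‖z - p‖ ^ 2) ≤ 1 := by
    rw [Real.exp_le_one_iff]
    nlinarith [sq_nonneg ‖z - p‖]
  have epi : 0 < Real.exp (-γ * ‖p - xi‖ ^ 2) := Real.exp_pos _
  have epj : 0 < Real.exp (-γ * ‖p - xj‖ ^ 2) := Real.exp_pos _
  constructor
  · have k1 : αi * Real.exp (-γ * ‖p - xi‖ ^ 2) * Real.exp (-γ * ‖z - p‖ ^ 2)
        ≤ αi * Real.exp (-γ * ‖p - xi‖ ^ 2) :=
      mul_le_of_le_one_right (mul_pos hαi epi).le hle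
    have k2 : αj * Real.exp (-γ * ‖p - xj‖ ^ 2) * Real.exp (-γ * ‖z - p‖ ^ 2)
        ≤ αj * Real.exp (-γ * ‖p - xj‖ ^ 2) :=
      mul_le_of_le_one_right (mul_pos hαj epj).le hle
    rw [hm z, hm p, ei, ej]
    nlinarith [k1, k2]
  · intro hne
    have hnz : 0 < ‖z - p‖ ^ 2 :=
      pow_pos (norm_sub_pos_iff.mpr hne) 2
    have hlt : Real.exp (-γ * ‖z - p‖ ^ 2) < 1 := by
      rw [Real.exp_lt_one_iff]
      nlinarith
    have k1 : αi * (Real.exp (-γ * ‖p - xi‖ ^ 2) * Real.exp (-γ * ‖z - p‖ ^ 2))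
        < αi * Real.exp (-γ * ‖p - xi‖ ^ 2) := by
      rw [← mul_assoc]
      exact mul_lt_of_lt_one_right (mul_pos hαi epi) hlt
    have k2 : αj * (Real.exp (-γ * ‖p - xj‖ ^ 2) * Real.exp (-γ * ‖z - p‖ ^ 2))
        < αj * Real.exp (-γ * ‖p - xj‖ ^ 2) := by
      rw [← mul_assoc]
      exact mul_lt_of_lt_one_right (mul_pos hαj epj) hlt
    rw [hm z, hm p, ei, ej]
    linarith
end

section
/- Let d ≥ 1, γ > 0, x_i ≠ x_j points of ℝ^d (Euclidean space), and α_i > 0 > α_j. Define m : ℝ^d → ℝ by m(z) = α_i·exp(−γ‖z − x_i‖²) + α_j·exp(−γ‖z − x_j‖²). Then the function z ↦ |m(z)| attains a strictly positive global maximum on ℝ^d, and every global maximizer z* of z ↦ |m(z)| has the form z* = h·x_i + (1 − h)·x_j for some h with h < 0 or h > 1. -/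
open scoped RealInnerProductSpace

/-- Directional derivative of the Gaussian mixture vanishes at an extremum,
giving the collinearity equation. -/
lemma gaussian_merge_key
    (d : ℕ) (γ : ℝ) (hγ : 0 < γ)
    (xi xj : EuclideanSpace ℝ (Fin d))
    (αi αj : ℝ)
    (m : EuclideanSpace ℝ (Fin d) → ℝ)
    (hm : ∀ z, m z = αi * Real.exp (-γ * ‖z - xi‖ ^ 2)
        + αj * Real.exp (-γ * ‖z - xj‖ ^ 2))
    (zstar : EuclideanSpace ℝ (Fin d)) (hmax : ∀ v, |m v| ≤ |m zstar|)
    (hne : m zstar ≠ 0) (v : EuclideanSpace ℝ (Fin d)) :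
    αi * Real.exp (-γ * ‖zstar - xi‖ ^ 2) * ⟪zstar - xi, v⟫
      + αj * Real.exp (-γ * ‖zstar - xj‖ ^ 2) * ⟪zstar - xj, v⟫ = 0 := by
  set Ai : ℝ := ‖zstar - xi‖ ^ 2 with hAi
  set Aj : ℝ := ‖zstar - xj‖ ^ 2 with hAj
  set Bi : ℝ := ⟪zstar - xi, v⟫ with hBi
  set Bj : ℝ := ⟪zstar - xj, v⟫ with hBj
  set C : ℝ := ‖v‖ ^ 2 with hC
  set φ : ℝ → ℝ := fun t => m (zstar + t • v) with hφdef
  have hφ : ∀ t : ℝ, φ t = αi * Real.exp (-γ * (Ai + 2 * Bi * t + C * t ^ 2))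
      + αj * Real.exp (-γ * (Aj + 2 * Bj * t + C * t ^ 2)) := by
    intro t
    have hn : ∀ c : EuclideanSpace ℝ (Fin d),
        ‖zstar + t • v - c‖ ^ 2
          = ‖zstar - c‖ ^ 2 + 2 * ⟪zstar - c, v⟫ * t + ‖v‖ ^ 2 * t ^ 2 := by
      intro c
      have h1 : zstar + t • v - c = (zstar - c) + t • v := by abel
      rw [h1, norm_add_sq_real, real_inner_smul_right, norm_smul]
      simp [mul_pow]
      ring
    simp only [hφdef, hm, hn xi, hn xj, hAi, hAj, hBi, hBj, hC]
  -- derivative of φ at 0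
  have hq : ∀ (A B : ℝ), HasDerivAt (fun t : ℝ => A + 2 * B * t + C * t ^ 2)
      (2 * B) 0 := by
    intro A B
    have h1 := (((hasDerivAt_id (0:ℝ)).const_mul (2 * B)).const_add A).add
        ((hasDerivAt_pow 2 (0:ℝ)).const_mul C)
    refine h1.congr_deriv ?_
    simp
  have hder : HasDerivAt φ
      (αi * Real.exp (-γ * Ai) * (-γ * (2 * Bi))
        + αj * Real.exp (-γ * Aj) * (-γ * (2 * Bj))) 0 := by
    have h1 : HasDerivAt (fun t : ℝ =>
        αi * Real.exp (-γ * (Ai + 2 * Bi * t + C * t ^ 2))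
          + αj * Real.exp (-γ * (Aj + 2 * Bj * t + C * t ^ 2)))
        (αi * (Real.exp (-γ * (Ai + 2 * Bi * 0 + C * 0 ^ 2)) * (-γ * (2 * Bi)))
          + αj * (Real.exp (-γ * (Aj + 2 * Bj * 0 + C * 0 ^ 2)) * (-γ * (2 * Bj)))) 0 := by
      exact ((((hq Ai Bi).const_mul (-γ)).exp.const_mul αi).add
        (((hq Aj Bj).const_mul (-γ)).exp.const_mul αj))
    have h2 : HasDerivAt (fun t : ℝ =>
        αi * Real.exp (-γ * (Ai + 2 * Bi * t + C * t ^ 2))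
          + αj * Real.exp (-γ * (Aj + 2 * Bj * t + C * t ^ 2)))
        (αi * Real.exp (-γ * Ai) * (-γ * (2 * Bi))
          + αj * Real.exp (-γ * Aj) * (-γ * (2 * Bj))) 0 := by
      convert h1 using 1
      norm_num
      ring
    exact (HasDerivAt.congr_of_eventuallyEq h2
      (Filter.Eventually.of_forall fun t => (hφ t)))
  have hφ0 : φ 0 = m zstar := by simp [hφdef]
  have hder0 : (αi * Real.exp (-γ * Ai) * (-γ * (2 * Bi))
      + αj * Real.exp (-γ * Aj) * (-γ * (2 * Bj))) = 0 := by
    rcases hne.lt_or_gt with hneg | hpos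
    · -- m zstar < 0 : local min of φ
      have hmin : IsLocalMin φ 0 := by
        apply Filter.Eventually.of_forall
        intro t
        have h1 : m (zstar + t • v) ≥ -|m (zstar + t • v)| := neg_abs_le _
        have h2 : |m (zstar + t • v)| ≤ |m zstar| := hmax _
        have h3 : |m zstar| = -(m zstar) := abs_of_neg hneg
        simp only [hφdef, hφ0]
        linarith
      exact hmin.hasDerivAt_eq_zero hder
    · have hmax' : IsLocalMax φ 0 := by
        apply Filter.Eventually.of_forall
        intro t
        have h1 : m (zstar + t • v) ≤ |m (zstar + t • v)| := le_abs_self _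
        have h2 : |m (zstar + t • v)| ≤ |m zstar| := hmax _
        have h3 : |m zstar| = m zstar := abs_of_pos hpos
        simp only [hφdef, hφ0]
        linarith
      exact hmax'.hasDerivAt_eq_zero hder
  have h4 : (-(2 * γ)) * (αi * Real.exp (-γ * Ai) * Bi + αj * Real.exp (-γ * Aj) * Bj)
      = (-(2 * γ)) * 0 := by
    rw [mul_zero]; linear_combination hder0
  exact mul_left_cancel₀ (neg_ne_zero.mpr (by positivity)) h4

/-- For coefficients of opposite sign, `z ↦ |m(z)|` with
`m(z) = αᵢ exp(-γ‖z-xᵢ‖²) + αⱼ exp(-γ‖z-xⱼ‖²)` attains a strictly positive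
global maximum, and every global maximizer lies on the line through `xᵢ` and
`xⱼ` outside the segment between them. -/
theorem gaussian_merge_opposite_sign_maximizer_outside_segment
    (d : ℕ) (hd : 1 ≤ d) (γ : ℝ) (hγ : 0 < γ)
    (xi xj : EuclideanSpace ℝ (Fin d)) (hx : xi ≠ xj)
    (αi αj : ℝ) (hαi : 0 < αi) (hαj : αj < 0)
    (m : EuclideanSpace ℝ (Fin d) → ℝ)
    (hm : ∀ z, m z = αi * Real.exp (-γ * ‖z - xi‖ ^ 2)
        + αj * Real.exp (-γ * ‖z - xj‖ ^ 2)) :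
    (∃ z : EuclideanSpace ℝ (Fin d), 0 < |m z| ∧ ∀ v, |m v| ≤ |m z|) ∧
    (∀ zstar : EuclideanSpace ℝ (Fin d), (∀ v, |m v| ≤ |m zstar|) →
      ∃ h : ℝ, (h < 0 ∨ 1 < h) ∧ zstar = h • xi + (1 - h) • xj) := by
  have hD : (0:ℝ) < ‖xi - xj‖ := by
    rw [norm_pos_iff]; exact sub_ne_zero.mpr hx
  -- a point where |m| > 0
  have hE1 : Real.exp (-γ * ‖xi - xj‖ ^ 2) < 1 := by
    apply Real.exp_lt_one_iff.mpr
    have h2 : 0 < ‖xi - xj‖ ^ 2 := pow_pos hD 2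
    nlinarith
  have hE0 : 0 < Real.exp (-γ * ‖xi - xj‖ ^ 2) := Real.exp_pos _
  have h0 : ∃ z0, 0 < |m z0| := by
    by_contra hc
    push_neg at hc
    have hzi : m xi = 0 := abs_eq_zero.mp (le_antisymm (hc xi) (abs_nonneg _))
    have hzj : m xj = 0 := abs_eq_zero.mp (le_antisymm (hc xj) (abs_nonneg _))
    rw [hm xi] at hzi
    rw [hm xj] at hzj
    simp only [sub_self, norm_zero] at hzi hzj
    rw [norm_sub_rev xj xi] at hzj
    have h00 : -γ * (0:ℝ) ^ 2 = 0 := by ring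
    rw [h00, Real.exp_zero, mul_one] at hzi hzj
    set E := Real.exp (-γ * ‖xi - xj‖ ^ 2) with hE
    nlinarith [hzi, hzj, hE0, hE1, hαj]
  obtain ⟨z0, hz0⟩ := h0
  -- continuity
  have hcont : Continuous m := by
    have : m = fun z => αi * Real.exp (-γ * ‖z - xi‖ ^ 2)
        + αj * Real.exp (-γ * ‖z - xj‖ ^ 2) := funext hm
    rw [this]
    fun_prop
  -- tendsto 0 at cocompact
  have htend : Filter.Tendsto m (Filter.cocompact _) (nhds 0) := by
    have hnorm : ∀ c : EuclideanSpace ℝ (Fin d),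
        Filter.Tendsto (fun z : EuclideanSpace ℝ (Fin d) => ‖z - c‖)
          (Filter.cocompact _) Filter.atTop := by
      intro c
      apply Filter.tendsto_atTop_mono (fun z => by
        have := norm_sub_norm_le z c; linarith : ∀ z, ‖z‖ - ‖c‖ ≤ ‖z - c‖)
      exact Filter.tendsto_atTop_add_const_right _ (-‖c‖)
        tendsto_norm_cocompact_atTop |>.congr (fun z => by ring)
    have hterm : ∀ (α : ℝ) (c : EuclideanSpace ℝ (Fin d)),
        Filter.Tendsto (fun z : EuclideanSpace ℝ (Fin d) =>
          α * Real.exp (-γ * ‖z - c‖ ^ 2)) (Filter.cocompact _) (nhds 0) := by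
      intro α c
      have h1 : Filter.Tendsto (fun t : ℝ => -γ * t ^ 2) Filter.atTop Filter.atBot := by
        have h2 : Filter.Tendsto (fun t : ℝ => t ^ 2) Filter.atTop Filter.atTop :=
          Filter.tendsto_pow_atTop (by norm_num)
        have h3 : Filter.Tendsto (fun t : ℝ => γ * t ^ 2) Filter.atTop Filter.atTop :=
          Filter.Tendsto.const_mul_atTop hγ h2
        have h4 := Filter.tendsto_neg_atTop_atBot.comp h3
        exact h4.congr (fun t => by simp [Function.comp]; try ring)
      have h5 : Filter.Tendsto (fun z : EuclideanSpace ℝ (Fin d) =>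
          Real.exp (-γ * ‖z - c‖ ^ 2)) (Filter.cocompact _) (nhds 0) :=
        Real.tendsto_exp_atBot.comp (h1.comp (hnorm c))
      have h6 := h5.const_mul α
      simpa using h6
    have h7 := (hterm αi xi).add (hterm αj xj)
    simp only [add_zero] at h7
    exact h7.congr (fun z => (hm z).symm)
  -- existence of maximizer
  have habs : Filter.Tendsto (fun z => |m z|) (Filter.cocompact _) (nhds 0) := by
    simpa using htend.abs
  have hev : ∀ᶠ z in Filter.cocompact (EuclideanSpace ℝ (Fin d)),
      |m z| ≤ |m z0| := habs.eventually_le_const hz0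
  obtain ⟨zmax, hzmax⟩ := (hcont.abs).exists_forall_ge' z0 hev
  refine ⟨⟨zmax, lt_of_lt_of_le hz0 (hzmax z0), hzmax⟩, ?_⟩
  -- characterization of maximizers
  intro zstar hmaxst
  have hpos : 0 < |m zstar| := lt_of_lt_of_le hz0 (hmaxst z0)
  have hne : m zstar ≠ 0 := by
    intro h; rw [h] at hpos; simp at hpos
  have key := gaussian_merge_key d γ hγ xi xj αi αj m hm zstar hmaxst hne
  set a : ℝ := αi * Real.exp (-γ * ‖zstar - xi‖ ^ 2) with ha
  set b : ℝ := -(αj * Real.exp (-γ * ‖zstar - xj‖ ^ 2)) with hb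
  have ha0 : 0 < a := mul_pos hαi (Real.exp_pos _)
  have hb0 : 0 < b := by
    rw [hb]
    have := mul_neg_of_neg_of_pos hαj (Real.exp_pos (-γ * ‖zstar - xj‖ ^ 2))
    linarith
  have hb2 : αj * Real.exp (-γ * ‖zstar - xj‖ ^ 2) = -b := by rw [hb]; ring
  have key' : ∀ v, a * ⟪zstar - xi, v⟫ = b * ⟪zstar - xj, v⟫ := by
    intro v
    linear_combination key v - (⟪zstar - xj, v⟫ : ℝ) * hb2
  have hvec : a • (zstar - xi) = b • (zstar - xj) := by
    have hw : ⟪a • (zstar - xi) - b • (zstar - xj),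
        a • (zstar - xi) - b • (zstar - xj)⟫ = 0 := by
      set w := a • (zstar - xi) - b • (zstar - xj) with hwdef
      rw [hwdef]
      rw [inner_sub_left, real_inner_smul_left, real_inner_smul_left]
      have := key' w
      linarith
    have := inner_self_eq_zero.mp hw
    exact sub_eq_zero.mp this
  have hab : a ≠ b := by
    intro h
    apply hx
    rw [h] at hvec
    have := smul_right_injective (EuclideanSpace ℝ (Fin d)) (ne_of_gt hb0) hvec
    exact sub_right_injective this
  refine ⟨a / (a - b), ?_, ?_⟩
  · rcases lt_or_gt_of_ne hab with h1 | h1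
    · left
      apply div_neg_of_pos_of_neg ha0
      linarith
    · right
      rw [lt_div_iff₀ (by linarith : (0:ℝ) < a - b)]
      linarith
  · have hab0 : a - b ≠ 0 := sub_ne_zero.mpr hab
    have heq : (a - b) • zstar = a • xi - b • xj := by
      have h1 : a • zstar - a • xi = b • zstar - b • xj := by
        rw [← smul_sub, ← smul_sub]; exact hvec
      rw [sub_smul]
      linear_combination (norm := module) h1
    apply smul_right_injective (EuclideanSpace ℝ (Fin d)) hab0
    show (a - b) • zstar
      = (a - b) • ((a / (a - b)) • xi + (1 - a / (a - b)) • xj)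
    rw [heq, smul_add, smul_smul, smul_smul]
    have e1 : (a - b) * (a / (a - b)) = a := by field_simp
    have e2 : (a - b) * (1 - a / (a - b)) = -b := by field_simp; ring
    rw [e1, e2]
    module
end
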